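/- For every m ∈ ℕ there exists a graph G with tw(G) ≤ m and a non-piercing family 𝓗 of connected subgraphs of G such that every dual support Q* (a graph on 𝓗 in which {H ∈ 𝓗 : v ∈ V(H)} induces a connected subgraph for each v ∈ V(G)) contains an N × N grid as a subgraph with N = C(⌊m/2⌋, ⌊⌊m/2⌋/2⌋), and hence tw(Q*) ≥ 2^{⌊m/2⌋}/√m. -/

import Mathlib

open scoped ENNReal

/-- A tree decomposition of a graph `G`: a tree `T` with bags `bag i ⊆ V` such that
every vertex appears in a bag, every edge lies in a bag, and the bags containing a
fixed vertex form a connected subtree. -/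
def IsTreeDecomp {V ι : Type} (G : SimpleGraph V) (T : SimpleGraph ι) (bag : ι → Set V) : Prop :=
  T.IsTree ∧ (∀ v, ∃ i, v ∈ bag i) ∧
    (∀ u v, G.Adj u v → ∃ i, u ∈ bag i ∧ v ∈ bag i) ∧
    (∀ v, (T.induce {i | v ∈ bag i}).Connected)

/-- Width of a tree decomposition: (max bag size) − 1. -/
noncomputable def decompWidth {V ι : Type} (bag : ι → Set V) : ℕ∞ :=
  (⨆ i, (bag i).encard) - 1

/-- Treewidth: the infimum of widths of tree decompositions. -/
noncomputable def treewidth {V : Type} (G : SimpleGraph V) : ℕ∞ :=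
  sInf {w : ℕ∞ | ∃ (ι : Type) (T : SimpleGraph ι) (bag : ι → Set V),
    IsTreeDecomp G T bag ∧ w = decompWidth bag}

/-- A family of vertex sets is non-piercing in `G` if every pairwise difference
(when nonempty) induces a connected subgraph of `G`. -/
def NonPiercing {V : Type} (G : SimpleGraph V) (F : Set (Set V)) : Prop :=
  ∀ H ∈ F, ∀ H' ∈ F, (H \ H').Nonempty → (G.induce (H \ H')).Connected

/-- Outerplanarity via a one-page (circular, non-crossing) layout. -/
def Outerplanar {α : Type} (Q : SimpleGraph α) : Prop :=
  ∃ f : α → ℕ, Function.Injective f ∧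
    ∀ a b c d : α, Q.Adj a b → Q.Adj c d →
      ¬ (f a < f c ∧ f c < f b ∧ f b < f d)

/-- `a, b, c` appear in this (clockwise) cyclic order on the cycle `Fin n`. -/
def Cyc3 {n : ℕ} (a b c : Fin n) : Prop :=
  (a < b ∧ b < c) ∨ (b < c ∧ c < a) ∨ (c < a ∧ a < b)

/-- `a, b, c, d` appear in this (clockwise) cyclic order on the cycle `Fin n`. -/
def Cyc4 {n : ℕ} (a b c d : Fin n) : Prop :=
  (a < b ∧ b < c ∧ c < d) ∨ (b < c ∧ c < d ∧ d < a) ∨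
    (c < d ∧ d < a ∧ a < b) ∨ (d < a ∧ a < b ∧ b < c)

/-- Open arc of vertices strictly between `u` and `v` clockwise. -/
def arcO {n : ℕ} (u v : Fin n) : Set (Fin n) := {w | Cyc3 u w v}

/-- Closed arc of vertices from `u` to `v` clockwise (inclusive). -/
def arcC {n : ℕ} (u v : Fin n) : Set (Fin n) := {u} ∪ {v} ∪ {w | Cyc3 u w v}

/-- The cycle system is `axax`-free. -/
def AxaxFree {n : ℕ} (F : Set (Set (Fin n))) : Prop :=
  ¬ ∃ H ∈ F, ∃ H' ∈ F, ∃ a₁ x₁ a₂ x₂ : Fin n,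
    Cyc4 a₁ x₁ a₂ x₂ ∧ a₁ ∈ H \ H' ∧ a₂ ∈ H \ H' ∧ x₁ ∈ H' ∧ x₂ ∈ H'

/-- The cycle system is `abab`-free. -/
def AbabFree {n : ℕ} (F : Set (Set (Fin n))) : Prop :=
  ¬ ∃ H ∈ F, ∃ H' ∈ F, ∃ a₁ b₁ a₂ b₂ : Fin n,
    Cyc4 a₁ b₁ a₂ b₂ ∧ a₁ ∈ H \ H' ∧ a₂ ∈ H \ H' ∧ b₁ ∈ H' \ H ∧ b₂ ∈ H' \ H

/-- The vertices appearing in bags of the component of `T` minus the edge `{x,y}`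
that contains `x` (the `x`-side of the tree decomposition). -/
def sideVerts {V ι : Type} (T : SimpleGraph ι) (bag : ι → Set V) (x y : ι) : Set V :=
  ⋃ i ∈ {i | (T.deleteEdges {s(x, y)}).Reachable x i}, bag i

/-- Adjacency in the `N × N` grid graph. -/
def gridAdj {N : ℕ} (p q : Fin N × Fin N) : Prop :=
  (p.1 = q.1 ∧ (p.2.val + 1 = q.2.val ∨ q.2.val + 1 = p.2.val)) ∨
    (p.2 = q.2 ∧ (p.1.val + 1 = q.1.val ∨ q.1.val + 1 = p.1.val))

/-- Clockwise distance from `b` to `a` on the cycle `Fin n`. -/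
def relpos {n : ℕ} (a b : Fin n) : ℕ := (a.val + n - b.val) % n

/-- Lexicographic comparison on pairs of naturals. -/
def lexLe (p q : ℕ × ℕ) : Prop := p.1 < q.1 ∨ (p.1 = q.1 ∧ p.2 ≤ q.2)

/-- A set of indices forming a (possibly empty) cyclic interval of `Fin m`. -/
def CycInterval {m : ℕ} (S : Set (Fin m)) : Prop := S = ∅ ∨ ∃ i j : Fin m, S = arcC i j

/-- Maximal elements of a family of sets under inclusion. -/
def maxElems {X : Type} (F : Set (Set X)) : Set (Set X) :=
  {H ∈ F | ∀ H' ∈ F, H ⊆ H' → H = H'}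


/-! ## Auxiliary development -/

set_option linter.unusedSectionVars false
set_option maxHeartbeats 1000000

namespace Stmt9Aux

open SimpleGraph Walk

/-! ### Hub connectivity -/

lemma connected_induce_of_hub {α : Type} (G : SimpleGraph α) (A : Set α) (h : α) (hh : h ∈ A)
    (hadj : ∀ x ∈ A, x = h ∨ G.Adj x h) : (G.induce A).Connected := by
  rw [SimpleGraph.connected_iff]
  have key : ∀ x : A, (G.induce A).Reachable x ⟨h, hh⟩ := by
    rintro ⟨x, hx⟩
    rcases hadj x hx with rfl | hxh
    · exact Reachable.refl _
    · exact SimpleGraph.Adj.reachable (by exact hxh)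
  exact ⟨fun x y => (key x).trans (key y).symm, ⟨⟨h, hh⟩⟩⟩

lemma connected_induce_top {α : Type} {A : Set α} (hA : A.Nonempty) :
    ((⊤ : SimpleGraph α).induce A).Connected := by
  obtain ⟨h, hh⟩ := hA
  refine connected_induce_of_hub _ A h hh ?_
  intro x hx
  by_cases hxh : x = h
  · exact Or.inl hxh
  · exact Or.inr hxh

/-! ### Two-element connected induced set gives an edge -/

private lemma exists_adj_of_ne {β : Type} {Q : SimpleGraph β} {u v : β} (w : Q.Walk u v)
    (h : u ≠ v) : ∃ z, Q.Adj u z := by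
  cases w with
  | nil => exact absurd rfl h
  | cons h' p => exact ⟨_, h'⟩

lemma adj_of_connected_induce_pair {α : Type} (Q : SimpleGraph α) {a b : α} (hne : a ≠ b)
    (h : (Q.induce {x | x = a ∨ x = b}).Connected) : Q.Adj a b := by
  have ha : a ∈ {x | x = a ∨ x = b} := Or.inl rfl
  have hb : b ∈ {x | x = a ∨ x = b} := Or.inr rfl
  obtain ⟨w⟩ := h.preconnected ⟨a, ha⟩ ⟨b, hb⟩
  obtain ⟨z, hz⟩ := exists_adj_of_ne w (by
    intro hEq
    exact hne (congrArg Subtype.val hEq))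
  have hz' : Q.Adj a z.1 := hz
  rcases z.2 with h1 | h1
  · rw [h1] at hz'
    exact absurd hz' (Q.loopless.irrefl a)
  · rw [h1] at hz'
    exact hz'

/-! ### Star graphs are trees -/

def starG (β : Type) : SimpleGraph (Option β) where
  Adj a b := (a = none ∧ b ≠ none) ∨ (b = none ∧ a ≠ none)
  symm := by refine ⟨?_⟩; rintro a b (⟨h1, h2⟩ | ⟨h1, h2⟩)
             · exact Or.inr ⟨h1, h2⟩
             · exact Or.inl ⟨h1, h2⟩
  loopless := by refine ⟨?_⟩; rintro a (⟨h1, h2⟩ | ⟨h1, h2⟩) <;> exact h2 h1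

lemma starG_adj {β : Type} {a b : Option β} :
    (starG β).Adj a b ↔ ((a = none ∧ b ≠ none) ∨ (b = none ∧ a ≠ none)) := Iff.rfl

lemma starG_connected (β : Type) : (starG β).Connected := by
  rw [SimpleGraph.connected_iff]
  have key : ∀ x : Option β, (starG β).Reachable x none := by
    intro x
    cases x with
    | none => exact Reachable.refl _
    | some c => exact SimpleGraph.Adj.reachable (Or.inr ⟨rfl, by simp⟩)
  exact ⟨fun x y => (key x).trans (key y).symm, ⟨none⟩⟩

lemma starG_bridge {β : Type} {c : Option β} (hc : c ≠ none) :
    (starG β).IsBridge s(none, c) := by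
  rw [SimpleGraph.isBridge_iff]
  intro hr
  obtain ⟨p⟩ := hr.symm
  cases p with
  | nil => exact hc rfl
  | cons h' q =>
    rw [SimpleGraph.deleteEdges_adj] at h'
    obtain ⟨ha, hne⟩ := h'
    rcases ha with ⟨h1, _⟩ | ⟨h1, h2⟩
    · exact hc h1
    · subst h1
      exact hne (by rw [Sym2.eq_swap]; exact rfl)

lemma starG_isTree (β : Type) : (starG β).IsTree := by
  refine ⟨starG_connected β, ?_⟩
  rw [SimpleGraph.isAcyclic_iff_forall_adj_isBridge]
  intro v w hadj
  rcases hadj with ⟨h1, h2⟩ | ⟨h1, h2⟩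
  · subst h1
    exact starG_bridge h2
  · subst h1
    rw [Sym2.eq_swap]
    exact starG_bridge h2

/-! ### Unique paths in trees and the Helly property for subtrees -/

section TreeHelly

variable {ι : Type} [DecidableEq ι] {T : SimpleGraph ι}

noncomputable def tpath (hT : T.IsTree) (u v : ι) : T.Walk u v :=
  ((hT.existsUnique_path u v).exists).choose

lemma tpath_isPath (hT : T.IsTree) (u v : ι) : (tpath hT u v).IsPath :=
  ((hT.existsUnique_path u v).exists).choose_spec

lemma eq_tpath (hT : T.IsTree) {u v : ι} (p : T.Walk u v) (hp : p.IsPath) :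
    p = tpath hT u v :=
  (hT.existsUnique_path u v).unique hp (tpath_isPath hT u v)

lemma tpath_support_subset (hT : T.IsTree) {u v : ι} (p : T.Walk u v) :
    (tpath hT u v).support ⊆ p.support := by
  have h1 : p.bypass = tpath hT u v := eq_tpath hT _ p.bypass_isPath
  rw [← h1]
  exact p.support_bypass_subset

lemma reachable_induce_of_walk {A : Set ι} :
    ∀ {u v : ι} (p : T.Walk u v), (∀ x ∈ p.support, x ∈ A) → ∀ (hu : u ∈ A) (hv : v ∈ A),
    (T.induce A).Reachable ⟨u, hu⟩ ⟨v, hv⟩ := by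
  intro u v p
  induction p with
  | nil => intro _ hu hv; exact Reachable.refl _
  | @cons u y v h q ih =>
    intro hs hu hv
    have hy : y ∈ A := hs y (by rw [Walk.support_cons]; exact List.mem_cons_of_mem _ q.start_mem_support)
    refine Reachable.trans (SimpleGraph.Adj.reachable (u := (⟨u, hu⟩ : A)) (v := ⟨y, hy⟩) (by exact h)) (ih ?_ hy hv)
    intro x hx
    exact hs x (by rw [Walk.support_cons]; exact List.mem_cons_of_mem _ hx)

lemma subtree_path_subset (hT : T.IsTree) {A : Set ι} (hA : (T.induce A).Connected) {u v : ι}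
    (hu : u ∈ A) (hv : v ∈ A) : ∀ x ∈ (tpath hT u v).support, x ∈ A := by
  obtain ⟨w⟩ := hA.preconnected ⟨u, hu⟩ ⟨v, hv⟩
  have hsub := tpath_support_subset hT (w.map (SimpleGraph.Embedding.induce A).toHom)
  intro x hx
  have hx2 := hsub hx
  rw [Walk.support_map] at hx2
  obtain ⟨y, _, rfl⟩ := List.mem_map.mp hx2
  exact y.2

lemma median (hT : T.IsTree) (v : ι) :
    ∀ {u w : ι} (p : T.Walk u w), p.IsPath →
      ∃ x, x ∈ p.support ∧ x ∈ (tpath hT u v).support ∧ x ∈ (tpath hT w v).support := by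
  intro a b p
  induction p with
  | nil =>
    exact fun _ => ⟨_, Walk.start_mem_support _, Walk.start_mem_support _,
      Walk.start_mem_support _⟩
  | @cons u y w h p' ih =>
    intro hp
    have hp' : p'.IsPath := hp.of_cons
    have hpu : u ∉ p'.support := (Walk.cons_isPath_iff h p').mp hp |>.2
    cases hr : tpath hT u v with
    | nil =>
      exact ⟨_, Walk.start_mem_support _, Walk.start_mem_support _, Walk.end_mem_support _⟩
    | @cons _ z _ h' r' =>
      have hcpath : (Walk.cons h' r').IsPath := by rw [← hr]; exact tpath_isPath hT u v
      have hcr' : r'.IsPath := hcpath.of_cons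
      have hcu : u ∉ r'.support := (Walk.cons_isPath_iff h' r').mp hcpath |>.2
      by_cases hz : z = y
      · subst hz
        have hr' : r' = tpath hT z v := eq_tpath hT r' hcr'
        obtain ⟨x, hx1, hx2, hx3⟩ := ih hp'
        refine ⟨x, ?_, ?_, hx3⟩
        · rw [Walk.support_cons]; exact List.mem_cons_of_mem _ hx1
        · rw [Walk.support_cons]
          refine List.mem_cons_of_mem _ ?_
          rw [hr']; exact hx2
      · have hdisj : ∀ t, t ∈ (Walk.cons h p').support → t ∈ r'.support → False := by
          intro t ht1 ht2
          by_cases htu : t = u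
          · subst htu; exact hcu ht2
          · have ht1' : t ∈ p'.support := by
              rw [Walk.support_cons] at ht1
              rcases List.mem_cons.mp ht1 with h0 | h0
              · exact absurd h0 htu
              · exact h0
            have q1 : (Walk.cons h (p'.takeUntil t ht1')).IsPath :=
              (hp'.takeUntil ht1').cons
                (fun hmem => hpu (Walk.support_takeUntil_subset _ ht1' hmem))
            have q2 : (Walk.cons h' (r'.takeUntil t ht2)).IsPath :=
              (hcr'.takeUntil ht2).cons
                (fun hmem => hcu (Walk.support_takeUntil_subset _ ht2 hmem))
            have e : Walk.cons h (p'.takeUntil t ht1') = Walk.cons h' (r'.takeUntil t ht2) :=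
              (eq_tpath hT _ q1).trans (eq_tpath hT _ q2).symm
            have hsup := congrArg Walk.support e
            rw [Walk.support_cons, Walk.support_cons] at hsup
            obtain ⟨-, h2⟩ := List.cons.inj hsup
            rw [Walk.support_eq_cons (p'.takeUntil t ht1'),
              Walk.support_eq_cons (r'.takeUntil t ht2)] at h2
            obtain ⟨hyz, -⟩ := List.cons.inj h2
            exact hz hyz.symm
        have hW : ((Walk.cons h p').reverse.append (Walk.cons h' r')).IsPath := by
          rw [Walk.isPath_def, Walk.support_append, List.nodup_append]
          refine ⟨hp.reverse.support_nodup, ?_, ?_⟩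
          · rw [Walk.support_cons]
            exact hcr'.support_nodup
          · intro t ht1 s ht2 hts
            subst hts
            rw [Walk.support_reverse, List.mem_reverse] at ht1
            rw [Walk.support_cons] at ht2
            exact hdisj t ht1 ht2
        have hWt : (Walk.cons h p').reverse.append (Walk.cons h' r') = tpath hT w v :=
          eq_tpath hT _ hW
        refine ⟨u, Walk.start_mem_support _, Walk.start_mem_support _, ?_⟩
        rw [← hWt, Walk.mem_support_append_iff]
        left
        rw [Walk.support_reverse, List.mem_reverse]
        exact Walk.start_mem_support _

lemma helly3 (hT : T.IsTree) {S1 S2 S3 : Set ι} (h1 : (T.induce S1).Connected)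
    (h2 : (T.induce S2).Connected) (h3 : (T.induce S3).Connected)
    (h12 : (S1 ∩ S2).Nonempty) (h13 : (S1 ∩ S3).Nonempty) (h23 : (S2 ∩ S3).Nonempty) :
    (S1 ∩ S2 ∩ S3).Nonempty := by
  obtain ⟨a, ha1, ha2⟩ := h12
  obtain ⟨b, hb1, hb3⟩ := h13
  obtain ⟨c, hc2, hc3⟩ := h23
  obtain ⟨x, hx1, hx2, hx3⟩ := median hT c (tpath hT a b) (tpath_isPath hT a b)
  exact ⟨x, ⟨subtree_path_subset hT h1 ha1 hb1 x hx1,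
    subtree_path_subset hT h2 ha2 hc2 x hx2⟩,
    subtree_path_subset hT h3 hb3 hc3 x hx3⟩

lemma subtree_inter (hT : T.IsTree) {S S' : Set ι} (hS : (T.induce S).Connected)
    (hS' : (T.induce S').Connected) (hne : (S ∩ S').Nonempty) :
    (T.induce (S ∩ S')).Connected := by
  rw [SimpleGraph.connected_iff]
  obtain ⟨e, he⟩ := hne
  refine ⟨?_, ⟨⟨e, he⟩⟩⟩
  show (T.induce (S ∩ S')).Preconnected
  intro x y
  obtain ⟨u, hu⟩ := x
  obtain ⟨v, hv⟩ := y
  obtain ⟨hu1, hu2⟩ := hu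
  obtain ⟨hv1, hv2⟩ := hv
  exact reachable_induce_of_walk (tpath hT u v)
    (fun x hx => Set.mem_inter (subtree_path_subset hT hS hu1 hv1 x hx)
      (subtree_path_subset hT hS' hu2 hv2 x hx)) _ _

lemma helly (hT : T.IsTree) : ∀ (n : ℕ) (F : Finset (Set ι)), F.card ≤ n →
    F.Nonempty → (∀ S ∈ F, (T.induce S).Connected) →
    (∀ S ∈ F, ∀ S' ∈ F, (S ∩ S').Nonempty) → ∃ x, ∀ S ∈ F, x ∈ S := by
  classical
  intro n
  induction n with
  | zero =>
    intro F hc hne _ _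
    obtain ⟨S, hS⟩ := hne
    simp [Finset.card_eq_zero.mp (Nat.le_zero.mp hc)] at hS
  | succ n ih =>
    intro F hc hne hsub hpair
    obtain ⟨S, hS⟩ := hne
    by_cases hFS : F.erase S = ∅
    · obtain ⟨x, hx1, -⟩ := hpair S hS S hS
      refine ⟨x, ?_⟩
      intro S' hS'
      have : S' = S := by
        by_contra hne'
        exact absurd (Finset.mem_erase.mpr ⟨hne', hS'⟩) (by rw [hFS]; simp)
      rw [this]; exact hx1
    · set F' := (F.erase S).image (fun S' => S' ∩ S) with hF'
      have hmemF : ∀ S' ∈ F.erase S, S' ∈ F := fun S' h => Finset.mem_of_mem_erase h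
      have hcard : F'.card ≤ n := by
        have h1 : F'.card ≤ (F.erase S).card := Finset.card_image_le
        have h2 : (F.erase S).card = F.card - 1 := Finset.card_erase_of_mem hS
        have h3 : 1 ≤ F.card := Finset.card_pos.mpr ⟨S, hS⟩
        omega
      have hne' : F'.Nonempty := by
        rw [Finset.image_nonempty]
        exact Finset.nonempty_iff_ne_empty.mpr hFS
      have hsub' : ∀ X ∈ F', (T.induce X).Connected := by
        intro X hX
        obtain ⟨S', hS', rfl⟩ := Finset.mem_image.mp hX
        exact subtree_inter hT (hsub S' (hmemF S' hS')) (hsub S hS)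
          (hpair S' (hmemF S' hS') S hS)
      have hpair' : ∀ X ∈ F', ∀ Y ∈ F', (X ∩ Y).Nonempty := by
        intro X hX Y hY
        obtain ⟨S1, hS1, rfl⟩ := Finset.mem_image.mp hX
        obtain ⟨S2, hS2, rfl⟩ := Finset.mem_image.mp hY
        obtain ⟨x, ⟨hx1, hx2⟩, hx3⟩ := helly3 hT (hsub S1 (hmemF S1 hS1))
          (hsub S2 (hmemF S2 hS2)) (hsub S hS)
          (hpair S1 (hmemF S1 hS1) S2 (hmemF S2 hS2))
          (hpair S1 (hmemF S1 hS1) S hS) (hpair S2 (hmemF S2 hS2) S hS)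
        exact ⟨x, ⟨hx1, hx3⟩, hx2, hx3⟩
      obtain ⟨x, hx⟩ := ih F' hcard hne' hsub' hpair'
      refine ⟨x, ?_⟩
      intro S' hS'
      by_cases hSS : S' = S
      · subst hSS
        obtain ⟨S0, hS0⟩ := Finset.nonempty_iff_ne_empty.mpr hFS
        have := hx (S0 ∩ S') (Finset.mem_image_of_mem _ hS0)
        exact this.2
      · have := hx (S' ∩ S) (Finset.mem_image_of_mem _ (Finset.mem_erase.mpr ⟨hSS, hS'⟩))
        exact this.1

end TreeHelly

/-! ### Treewidth bounds -/

lemma le_treewidth_of_clique {α : Type} (Q : SimpleGraph α) (C : Finset α)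
    (hC : ∀ a ∈ C, ∀ b ∈ C, a ≠ b → Q.Adj a b) :
    (C.card : ℕ∞) - 1 ≤ treewidth Q := by
  classical
  apply le_sInf
  rintro w ⟨ι, T, bag, ⟨hTree, hcov, hedge, hconn⟩, rfl⟩
  rcases C.eq_empty_or_nonempty with rfl | hCne
  · simp only [Finset.card_empty, Nat.cast_zero, zero_tsub]
    exact zero_le
  · have hexists : ∃ i, ∀ a ∈ C, a ∈ bag i := by
      have := Classical.decEq ι
      set F : Finset (Set ι) := C.image (fun a => {i | a ∈ bag i}) with hF
      have hsub : ∀ S ∈ F, (T.induce S).Connected := by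
        intro S hS
        obtain ⟨a, -, rfl⟩ := Finset.mem_image.mp hS
        exact hconn a
      have hpair : ∀ S ∈ F, ∀ S' ∈ F, (S ∩ S').Nonempty := by
        intro S hS S' hS'
        obtain ⟨a, ha, rfl⟩ := Finset.mem_image.mp hS
        obtain ⟨b, hb, rfl⟩ := Finset.mem_image.mp hS'
        by_cases hab : a = b
        · subst hab
          obtain ⟨i, hi⟩ := hcov a
          exact ⟨i, hi, hi⟩
        · obtain ⟨i, hi1, hi2⟩ := hedge a b (hC a ha b hb hab)
          exact ⟨i, hi1, hi2⟩
      obtain ⟨x, hx⟩ := helly hTree F.card F le_rfl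
        (hCne.image _) hsub hpair
      exact ⟨x, fun a ha => hx _ (Finset.mem_image_of_mem _ ha)⟩
    obtain ⟨i, hi⟩ := hexists
    have h1 : (C.card : ℕ∞) ≤ (bag i).encard := by
      rw [← Set.encard_coe_eq_coe_finsetCard]
      exact Set.encard_mono (fun a ha => hi a (by exact_mod_cast ha))
    have h2 : (bag i).encard ≤ ⨆ j, (bag j).encard := le_iSup (fun j => (bag j).encard) i
    exact tsub_le_tsub_right (h1.trans h2) 1

lemma treewidth_le_decomp {V ι : Type} (G : SimpleGraph V) (T : SimpleGraph ι) (bag : ι → Set V)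
    (hd : IsTreeDecomp G T bag) : treewidth G ≤ decompWidth bag :=
  sInf_le ⟨ι, T, bag, hd, rfl⟩

lemma decompWidth_le {V ι : Type} (bag : ι → Set V) (m : ℕ)
    (h : ∀ i, (bag i).encard ≤ (m : ℕ∞) + 1) : decompWidth bag ≤ (m : ℕ∞) := by
  have h1 : (⨆ i, (bag i).encard) ≤ (m : ℕ∞) + 1 := iSup_le h
  have h2 := tsub_le_tsub_right h1 1
  have h3 : ((m : ℕ∞) + 1) - 1 = (m : ℕ∞) := by
    rw [← Nat.cast_one, ← Nat.cast_add, ← ENat.coe_sub]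
    norm_num
  rwa [h3] at h2

lemma treewidth_le_card_univ {V : Type} [Fintype V] (G : SimpleGraph V) (m : ℕ)
    (hcard : Fintype.card V ≤ m + 1) : treewidth G ≤ (m : ℕ∞) := by
  refine le_trans (treewidth_le_decomp G (starG Empty) (fun _ => Set.univ) ?_)
    (decompWidth_le _ m ?_)
  · refine ⟨starG_isTree _, fun v => ⟨none, trivial⟩, fun u v _ => ⟨none, trivial, trivial⟩, ?_⟩
    intro v
    have hs : {i : Option Empty | v ∈ Set.univ} = Set.univ := by ext i; simp
    rw [hs]
    refine connected_induce_of_hub _ _ none trivial ?_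
    rintro (_ | c) _
    · exact Or.inl rfl
    · exact c.elim
  · intro i
    rw [Set.encard_univ, ENat.card_eq_coe_fintype_card]
    have : ((Fintype.card V : ℕ) : ℕ∞) ≤ ((m + 1 : ℕ) : ℕ∞) := Nat.cast_le.mpr hcard
    rwa [Nat.cast_add, Nat.cast_one] at this

lemma final_bound {α : Type} (Q : SimpleGraph α) (C : Finset α) (K : ℕ) (hCcard : C.card = K)
    (hCadj : ∀ a ∈ C, ∀ b ∈ C, a ≠ b → Q.Adj a b) (x : ℝ)
    (hx : x ≤ ((K - 1 : ℕ) : ℝ)) :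
    ENNReal.ofReal x ≤ ((treewidth Q : ℕ∞) : ℝ≥0∞) := by
  have htw := le_treewidth_of_clique Q C hCadj
  rw [hCcard] at htw
  have htw2 : ((K - 1 : ℕ) : ℕ∞) ≤ treewidth Q := by
    rw [ENat.coe_sub, Nat.cast_one]; exact htw
  have htw3 := ENat.toENNReal_le.mpr htw2
  rw [ENat.toENNReal_coe] at htw3
  refine le_trans ?_ htw3
  rw [← ENNReal.ofReal_natCast]
  exact ENNReal.ofReal_le_ofReal hx

/-! ### The construction for `m ≥ 3` -/

abbrev VT (K m : ℕ) := (Fin K × Fin K) ⊕ Fin m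

def adjFn (K m : ℕ) : VT K m → VT K m → Prop
  | Sum.inl _, Sum.inl _ => False
  | Sum.inl _, Sum.inr _ => True
  | Sum.inr _, Sum.inl _ => True
  | Sum.inr a, Sum.inr b => a ≠ b

def GG (K m : ℕ) : SimpleGraph (VT K m) where
  Adj := adjFn K m
  symm := by
    refine ⟨?_⟩; rintro (a | a) (b | b) h
    · exact h.elim
    · exact trivial
    · exact trivial
    · exact Ne.symm h
  loopless := by
    refine ⟨?_⟩; rintro (a | a) h
    · exact h
    · exact h rfl

def HH {K m : ℕ} (S : Fin K → Finset (Fin m)) (i : Fin K) : Set (VT K m) :=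
  {x | match x with
       | Sum.inl pq => pq.1 = i ∨ pq.2 = i
       | Sum.inr e => e ∈ S i}

lemma mem_HH_inl {K m : ℕ} {S : Fin K → Finset (Fin m)} {pq : Fin K × Fin K} {i : Fin K} :
    (Sum.inl pq ∈ HH S i) ↔ (pq.1 = i ∨ pq.2 = i) := Iff.rfl

lemma mem_HH_inr {K m : ℕ} {S : Fin K → Finset (Fin m)} {e : Fin m} {i : Fin K} :
    (Sum.inr e ∈ HH S i) ↔ e ∈ S i := Iff.rfl

lemma connected_induce_GG {K m : ℕ} {A : Set (VT K m)} (e : Fin m) (he : Sum.inr e ∈ A) :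
    ((GG K m).induce A).Connected := by
  refine connected_induce_of_hub _ A (Sum.inr e) he ?_
  rintro (c | e') _
  · exact Or.inr trivial
  · by_cases h : e' = e
    · exact Or.inl (congrArg Sum.inr h)
    · exact Or.inr h

def bagT (K m : ℕ) : Option (Fin K × Fin K) → Set (VT K m)
  | none => Set.range Sum.inr
  | some c => insert (Sum.inl c) (Set.range Sum.inr)

lemma bagT_encard_le (K m : ℕ) (i : Option (Fin K × Fin K)) :
    (bagT K m i).encard ≤ (m : ℕ∞) + 1 := by
  have hr : (Set.range (Sum.inr : Fin m → VT K m)).encard = (m : ℕ∞) := by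
    rw [← Set.image_univ, (Sum.inr_injective.injOn).encard_image, Set.encard_univ,
      ENat.card_eq_coe_fintype_card, Fintype.card_fin]
  cases i with
  | none =>
    rw [show bagT K m none = Set.range Sum.inr from rfl, hr]
    exact le_self_add
  | some c =>
    refine le_trans (Set.encard_insert_le _ _) ?_
    rw [hr]

lemma decompT (K m : ℕ) : IsTreeDecomp (GG K m) (starG (Fin K × Fin K)) (bagT K m) := by
  refine ⟨starG_isTree _, ?_, ?_, ?_⟩
  · rintro (c | e)
    · exact ⟨some c, Set.mem_insert _ _⟩
    · exact ⟨none, ⟨e, rfl⟩⟩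
  · rintro (c | e) (d | f) h
    · exact h.elim
    · exact ⟨some c, Set.mem_insert _ _, Set.mem_insert_of_mem _ ⟨f, rfl⟩⟩
    · exact ⟨some d, Set.mem_insert_of_mem _ ⟨e, rfl⟩, Set.mem_insert _ _⟩
    · exact ⟨none, ⟨e, rfl⟩, ⟨f, rfl⟩⟩
  · rintro (c | e)
    · have hset : {i | Sum.inl c ∈ bagT K m i} = {some c} := by
        ext i
        cases i with
        | none =>
          simp only [Set.mem_setOf_eq, Set.mem_singleton_iff]
          constructor
          · rintro ⟨e, he⟩; exact absurd he (by simp)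
          · intro h; exact absurd h (by simp)
        | some d =>
          simp only [Set.mem_setOf_eq, Set.mem_singleton_iff]
          constructor
          · rintro (h | ⟨e, he⟩)
            · rw [Sum.inl.injEq] at h; rw [h]
            · exact absurd he (by simp)
          · intro h
            rw [Option.some.injEq] at h
            rw [h]; exact Set.mem_insert _ _
      rw [hset]
      refine connected_induce_of_hub _ _ (some c) rfl ?_
      intro x hx
      exact Or.inl hx
    · have hset : {i | Sum.inr e ∈ bagT K m i} = Set.univ := by
        ext i
        simp only [Set.mem_setOf_eq, Set.mem_univ, iff_true]
        cases i with
        | none => exact ⟨e, rfl⟩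
        | some d => exact Set.mem_insert_of_mem _ ⟨e, rfl⟩
      rw [hset]
      refine connected_induce_of_hub _ _ none trivial ?_
      rintro (_ | c) _
      · exact Or.inl rfl
      · exact Or.inr (starG_adj.mpr (Or.inr ⟨rfl, by simp⟩))

/-! ### Numerics -/

lemma van_sq (n : ℕ) : n.choose (n / 2) * n.choose (n / 2) ≤ (n + n).choose n := by
  rw [Nat.add_choose_eq]
  have hmem : (n / 2, n - n / 2) ∈ Finset.HasAntidiagonal.antidiagonal n := by
    rw [Finset.HasAntidiagonal.mem_antidiagonal]; omega
  have hle := Finset.single_le_sum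
    (f := fun ij : ℕ × ℕ => n.choose ij.1 * n.choose ij.2)
    (fun i _ => Nat.zero_le _) hmem
  have hsymm : n.choose (n - n / 2) = n.choose (n / 2) := Nat.choose_symm (Nat.div_le_self n 2)
  calc n.choose (n / 2) * n.choose (n / 2)
      = n.choose (n / 2) * n.choose (n - n / 2) := by rw [hsymm]
    _ ≤ _ := hle

lemma van_pow (n : ℕ) : 2 ^ n ≤ (n + n).choose n := by
  rw [Nat.add_choose_eq, Finset.Nat.sum_antidiagonal_eq_sum_range_succ_mk]
  calc 2 ^ n = ∑ k ∈ Finset.range (n + 1), n.choose k := (Nat.sum_range_choose n).symm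
    _ ≤ ∑ k ∈ Finset.range (n + 1), n.choose k * n.choose (n - k) := by
        refine Finset.sum_le_sum ?_
        intro k hk
        exact Nat.le_mul_of_pos_right _ (Nat.choose_pos (Nat.sub_le n k))

lemma pair_eq_of_eq_one {k : ℕ} (hk : k = 1) (a b : Fin k × Fin k) : a = b := by
  subst hk
  exact Subsingleton.elim a b

lemma not_gridAdj_of_eq_one {k : ℕ} (hk : k = 1) (p q : Fin k × Fin k) : ¬ gridAdj p q := by
  subst hk
  intro h
  have h1 := p.2.isLt
  have h2 := q.2.isLt
  have h3 := p.1.isLt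
  have h4 := q.1.isLt
  rcases h with ⟨-, h | h⟩ | ⟨-, h | h⟩ <;> omega

lemma grid_ne {N : ℕ} {p q : Fin N × Fin N} (h : gridAdj p q) : p ≠ q := by
  rintro rfl
  rcases h with ⟨-, h | h⟩ | ⟨-, h | h⟩ <;> omega

end Stmt9Aux

open Stmt9Aux

theorem stmt9 (m : ℕ) :
    ∃ (V : Type) (G : SimpleGraph V) (𝓗 : Set (Set V)),
      (∀ H ∈ 𝓗, (G.induce H).Connected) ∧ NonPiercing G 𝓗 ∧
      treewidth G ≤ (m : ℕ∞) ∧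
      ∀ Q : SimpleGraph ↥𝓗,
        (∀ v : V, {H : ↥𝓗 | v ∈ (H : Set V)}.Nonempty →
          (Q.induce {H : ↥𝓗 | v ∈ (H : Set V)}).Connected) →
        (∃ f : Fin (Nat.choose (m / 2) (m / 2 / 2)) × Fin (Nat.choose (m / 2) (m / 2 / 2)) → ↥𝓗,
          Function.Injective f ∧ ∀ p q, gridAdj p q → Q.Adj (f p) (f q)) ∧
        ENNReal.ofReal ((2 : ℝ) ^ (m / 2) / Real.sqrt m) ≤ (treewidth Q : ℝ≥0∞) := by
  by_cases hm3 : 3 ≤ m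
  case neg =>
    -- small cases m = 0, 1, 2
    interval_cases m
    · -- m = 0
      have hmem : (Set.univ : Set (Fin 1)) ∈ Set.range (fun _ : Fin 1 => (Set.univ : Set (Fin 1))) :=
        ⟨0, rfl⟩
      refine ⟨Fin 1, ⊥, Set.range (fun _ : Fin 1 => (Set.univ : Set (Fin 1))), ?_, ?_, ?_, ?_⟩
      · rintro H ⟨i, rfl⟩
        refine connected_induce_of_hub _ _ 0 trivial ?_
        intro x _
        exact Or.inl (Subsingleton.elim x 0)
      · rintro H ⟨i, rfl⟩ H' ⟨j, rfl⟩ hne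
        simp at hne
      · exact treewidth_le_card_univ _ 0 (by simp)
      · intro Q hQ
        constructor
        · refine ⟨fun _ => ⟨Set.univ, hmem⟩, fun a b _ => pair_eq_of_eq_one rfl a b, ?_⟩
          intro p q hpq
          exact absurd hpq (not_gridAdj_of_eq_one rfl p q)
        · have hz : ((2 : ℝ) ^ (0 / 2) / Real.sqrt (0 : ℕ)) = 0 := by
            norm_num [Real.sqrt_zero]
          rw [hz, ENNReal.ofReal_zero]
          exact zero_le
    · -- m = 1
      set HH1 : Fin 2 → Set (Fin 2) := fun i => {x | i ≤ x} with hHH1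
      have hHinj : Function.Injective HH1 := by
        intro i j hij
        have h1 : i ≤ j := (Set.ext_iff.mp hij j).mpr (le_refl j)
        have h2 : j ≤ i := (Set.ext_iff.mp hij i).mp (le_refl i)
        exact le_antisymm h1 h2
      refine ⟨Fin 2, ⊤, Set.range HH1, ?_, ?_, ?_, ?_⟩
      · rintro H ⟨i, rfl⟩
        exact connected_induce_top ⟨1, by
          show i ≤ 1
          rw [Fin.le_def]
          have := i.isLt
          omega⟩
      · rintro H ⟨i, rfl⟩ H' ⟨j, rfl⟩ hne
        exact connected_induce_top hne
      · exact treewidth_le_card_univ _ 1 (by simp)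
      · intro Q hQ
        set g : Fin 2 → ↥(Set.range HH1) := fun i => ⟨HH1 i, ⟨i, rfl⟩⟩ with hg
        have hginj : Function.Injective g := fun i j hij => hHinj (congrArg Subtype.val hij)
        have hmem1 : ∀ t : Fin 2, (1 : Fin 2) ∈ HH1 t := by decide
        have hset : {H : ↥(Set.range HH1) | (1 : Fin 2) ∈ (H : Set (Fin 2))} =
            {x | x = g 0 ∨ x = g 1} := by
          ext H
          simp only [Set.mem_setOf_eq]
          constructor
          · intro hmemH
            obtain ⟨t, ht⟩ := H.2
            have ht2 : t = 0 ∨ t = 1 := by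
              rcases t with ⟨tv, htv⟩
              interval_cases tv
              · exact Or.inl rfl
              · exact Or.inr rfl
            rcases ht2 with rfl | rfl
            · left; apply Subtype.ext; rw [← ht]
            · right; apply Subtype.ext; rw [← ht]
          · rintro (rfl | rfl)
            · exact hmem1 0
            · exact hmem1 1
        have hconn := hQ (1 : Fin 2) ⟨g 0, hmem1 0⟩
        rw [hset] at hconn
        have hadj01 : Q.Adj (g 0) (g 1) :=
          adj_of_connected_induce_pair Q (fun h => (by decide : (0 : Fin 2) ≠ 1) (hginj h)) hconn
        have hforce : ∀ i j : Fin 2, i ≠ j → Q.Adj (g i) (g j) := by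
          intro i j hij
          have hcase : (i = 0 ∧ j = 1) ∨ (i = 1 ∧ j = 0) := by
            rcases i with ⟨iv, hiv⟩; rcases j with ⟨jv, hjv⟩
            have : iv ≠ jv := fun h => hij (Fin.ext h)
            interval_cases iv <;> interval_cases jv <;> simp_all
          rcases hcase with ⟨rfl, rfl⟩ | ⟨rfl, rfl⟩
          · exact hadj01
          · exact hadj01.symm
        constructor
        · refine ⟨fun _ => g 0, fun a b _ => pair_eq_of_eq_one rfl a b, ?_⟩
          intro p q hpq
          exact absurd hpq (not_gridAdj_of_eq_one rfl p q)
        · classical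
          refine final_bound Q (Finset.univ.image g) 2 ?_ ?_ _ ?_
          · rw [Finset.card_image_of_injective _ hginj, Finset.card_univ, Fintype.card_fin]
          · intro a ha b hb hab
            obtain ⟨i, -, rfl⟩ := Finset.mem_image.mp ha
            obtain ⟨j, -, rfl⟩ := Finset.mem_image.mp hb
            exact hforce i j (fun h => hab (by rw [h]))
          · have h1 : Real.sqrt (1 : ℕ) = 1 := by
              rw [Nat.cast_one, Real.sqrt_one]
            rw [h1]
            norm_num
    · -- m = 2
      set HH2 : Fin 3 → Set (Fin 3) := fun i => {x | x ≠ i} with hHH2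
      have hHinj : Function.Injective HH2 := by
        intro i j hij
        by_contra hne
        exact ((Set.ext_iff.mp hij i).mpr hne) rfl
      have hthird : ∀ i j : Fin 3, i ≠ j → ∀ t : Fin 3, (-(i + j) ≠ t ↔ (t = i ∨ t = j)) := by
        decide
      refine ⟨Fin 3, ⊤, Set.range HH2, ?_, ?_, ?_, ?_⟩
      · rintro H ⟨i, rfl⟩
        exact connected_induce_top ⟨i + 1, by
          show i + 1 ≠ i
          exact (by decide : ∀ i : Fin 3, i + 1 ≠ i) i⟩
      · rintro H ⟨i, rfl⟩ H' ⟨j, rfl⟩ hne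
        exact connected_induce_top hne
      · exact treewidth_le_card_univ _ 2 (by simp)
      · intro Q hQ
        set g : Fin 3 → ↥(Set.range HH2) := fun i => ⟨HH2 i, ⟨i, rfl⟩⟩ with hg
        have hginj : Function.Injective g := fun i j hij => hHinj (congrArg Subtype.val hij)
        have hforce : ∀ i j : Fin 3, i ≠ j → Q.Adj (g i) (g j) := by
          intro i j hij
          have hvi : -(i + j) ∈ HH2 i := (hthird i j hij i).mpr (Or.inl rfl)
          have hvj : -(i + j) ∈ HH2 j := (hthird i j hij j).mpr (Or.inr rfl)
          have hset : {H : ↥(Set.range HH2) | -(i + j) ∈ (H : Set (Fin 3))} =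
              {x | x = g i ∨ x = g j} := by
            ext H
            simp only [Set.mem_setOf_eq]
            constructor
            · intro hmemH
              obtain ⟨t, ht⟩ := H.2
              rw [← ht] at hmemH
              rcases (hthird i j hij t).mp hmemH with rfl | rfl
              · left; apply Subtype.ext; rw [← ht]
              · right; apply Subtype.ext; rw [← ht]
            · rintro (rfl | rfl)
              · exact hvi
              · exact hvj
          have hconn := hQ (-(i + j)) ⟨g i, hvi⟩
          rw [hset] at hconn
          exact adj_of_connected_induce_pair Q (fun h => hij (hginj h)) hconn
        constructor
        · refine ⟨fun _ => g 0, fun a b _ => pair_eq_of_eq_one rfl a b, ?_⟩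
          intro p q hpq
          exact absurd hpq (not_gridAdj_of_eq_one rfl p q)
        · classical
          refine final_bound Q (Finset.univ.image g) 3 ?_ ?_ _ ?_
          · rw [Finset.card_image_of_injective _ hginj, Finset.card_univ, Fintype.card_fin]
          · intro a ha b hb hab
            obtain ⟨i, -, rfl⟩ := Finset.mem_image.mp ha
            obtain ⟨j, -, rfl⟩ := Finset.mem_image.mp hb
            exact hforce i j (fun h => hab (by rw [h]))
          · have h1 : (1 : ℝ) ≤ Real.sqrt ((2 : ℕ) : ℝ) := by
              rw [show (1 : ℝ) = Real.sqrt 1 from Real.sqrt_one.symm]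
              exact Real.sqrt_le_sqrt (by norm_num)
            have h0 : (0 : ℝ) < Real.sqrt ((2 : ℕ) : ℝ) := lt_of_lt_of_le one_pos h1
            calc (2 : ℝ) ^ (2 / 2) / Real.sqrt ((2 : ℕ) : ℝ)
                = 2 / Real.sqrt ((2 : ℕ) : ℝ) := by norm_num
              _ ≤ 2 := by rw [div_le_iff₀ h0]; linarith
              _ ≤ ((3 - 1 : ℕ) : ℝ) := by norm_num
  case pos =>
    classical
    set n := m / 2 with hn
    have hn1 : 1 ≤ n := by omega
    set K := m.choose n with hK
    have hKpos : 0 < K := Nat.choose_pos (by omega)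
    have hcardP :
        Fintype.card {s : Finset (Fin m) // s ∈ Finset.powersetCard n (Finset.univ : Finset (Fin m))} = K := by
      rw [Fintype.card_coe, Finset.card_powersetCard, Finset.card_univ, Fintype.card_fin]
    set eqv := Fintype.equivFinOfCardEq hcardP with heqv
    set S : Fin K → Finset (Fin m) := fun i => (eqv.symm i).1 with hS
    have hScard : ∀ i, (S i).card = n := fun i =>
      (Finset.mem_powersetCard.mp (eqv.symm i).2).2
    have hSinj : Function.Injective S := by
      intro i j hij
      have := eqv.symm.injective (Subtype.ext hij)
      exact this
    have hanti : ∀ i j : Fin K, i ≠ j → (S i \ S j).Nonempty := by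
      intro i j hij
      rw [Finset.sdiff_nonempty]
      intro hsubset
      exact hij (hSinj (Finset.eq_of_subset_of_card_le hsubset (by rw [hScard i, hScard j])))
    have hNK : Nat.choose (m / 2) (m / 2 / 2) * Nat.choose (m / 2) (m / 2 / 2) ≤ K := by
      calc Nat.choose (m / 2) (m / 2 / 2) * Nat.choose (m / 2) (m / 2 / 2)
          ≤ (n + n).choose n := van_sq n
        _ ≤ m.choose n := Nat.choose_le_choose n (by omega)
    have hK2 : 2 ^ n ≤ K :=
      le_trans (van_pow n) (Nat.choose_le_choose n (by omega))
    refine ⟨VT K m, GG K m, Set.range (HH S), ?_, ?_, ?_, ?_⟩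
    · rintro H ⟨i, rfl⟩
      obtain ⟨e, he⟩ := Finset.card_pos.mp (by rw [hScard i]; omega)
      exact connected_induce_GG e (mem_HH_inr.mpr he)
    · rintro H ⟨i, rfl⟩ H' ⟨j, rfl⟩ hne
      by_cases hij : i = j
      · subst hij
        simp at hne
      · obtain ⟨e, he⟩ := hanti i j hij
        rw [Finset.mem_sdiff] at he
        exact connected_induce_GG e ⟨mem_HH_inr.mpr he.1, fun hc => he.2 (mem_HH_inr.mp hc)⟩
    · exact le_trans (treewidth_le_decomp _ _ _ (decompT K m))
        (decompWidth_le _ m (bagT_encard_le K m))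
    · intro Q hQ
      have hHinj : Function.Injective (HH S) := by
        intro i j hij
        apply hSinj
        ext e
        exact Set.ext_iff.mp hij (Sum.inr e)
      set g : Fin K → ↥(Set.range (HH S)) := fun i => ⟨HH S i, ⟨i, rfl⟩⟩ with hg
      have hginj : Function.Injective g := fun i j hij => hHinj (congrArg Subtype.val hij)
      have hforce : ∀ i j : Fin K, i ≠ j → Q.Adj (g i) (g j) := by
        intro i j hij
        have hvi : Sum.inl (⟨i, j⟩ : Fin K × Fin K) ∈ HH S i := mem_HH_inl.mpr (Or.inl rfl)
        have hvj : Sum.inl (⟨i, j⟩ : Fin K × Fin K) ∈ HH S j := mem_HH_inl.mpr (Or.inr rfl)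
        have hset : {H : ↥(Set.range (HH S)) |
            Sum.inl (⟨i, j⟩ : Fin K × Fin K) ∈ (H : Set (VT K m))} = {x | x = g i ∨ x = g j} := by
          ext H
          simp only [Set.mem_setOf_eq]
          constructor
          · intro hmemH
            obtain ⟨t, ht⟩ := H.2
            rw [← ht] at hmemH
            rcases mem_HH_inl.mp hmemH with h | h
            · left; apply Subtype.ext; rw [← ht]
              simp only at h
              rw [h]
            · right; apply Subtype.ext; rw [← ht]
              simp only at h
              rw [h]
          · rintro (rfl | rfl)
            · exact hvi
            · exact hvj
        have hconn := hQ (Sum.inl (⟨i, j⟩ : Fin K × Fin K)) ⟨g i, hvi⟩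
        rw [hset] at hconn
        exact adj_of_connected_induce_pair Q (fun h => hij (hginj h)) hconn
      constructor
      · refine ⟨fun p => g (Fin.castLE hNK (finProdFinEquiv p)), ?_, ?_⟩
        · intro p q hpq
          exact finProdFinEquiv.injective (Fin.castLE_injective _ (hginj hpq))
        · intro p q hpq
          refine hforce _ _ ?_
          intro hEq
          exact grid_ne hpq (finProdFinEquiv.injective (Fin.castLE_injective _ hEq))
      · refine final_bound Q (Finset.univ.image g) K ?_ ?_ _ ?_
        · rw [Finset.card_image_of_injective _ hginj, Finset.card_univ, Fintype.card_fin]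
        · intro a ha b hb hab
          obtain ⟨i, -, rfl⟩ := Finset.mem_image.mp ha
          obtain ⟨j, -, rfl⟩ := Finset.mem_image.mp hb
          exact hforce i j (fun h => hab (by rw [h]))
        · -- (2:ℝ)^(m/2) / sqrt m ≤ K - 1
          have hK1R : ((K - 1 : ℕ) : ℝ) = (K : ℝ) - 1 := by
            rw [Nat.cast_sub hKpos]
            norm_num
          rw [hK1R]
          by_cases h4 : 4 ≤ m
          · have h4' : (4 : ℝ) ≤ (m : ℝ) := by exact_mod_cast h4
            have hs2 : (2 : ℝ) ≤ Real.sqrt m := by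
              rw [show (2 : ℝ) = Real.sqrt 4 by
                rw [show (4 : ℝ) = 2 ^ 2 by norm_num, Real.sqrt_sq (by norm_num : (0:ℝ) ≤ 2)]]
              exact Real.sqrt_le_sqrt h4'
            have hnn : (0 : ℝ) ≤ (2 : ℝ) ^ (m / 2) := by positivity
            have hd : (2 : ℝ) ^ (m / 2) / Real.sqrt m ≤ (2 : ℝ) ^ (m / 2) / 2 :=
              div_le_div_of_nonneg_left hnn (by norm_num) hs2
            refine hd.trans ?_
            rw [div_le_iff₀ (by norm_num : (0 : ℝ) < 2)]
            have hnat : 2 ^ n + 2 ≤ 2 * K := by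
              have h1 : 2 ≤ 2 ^ n := by
                calc 2 = 2 ^ 1 := rfl
                  _ ≤ 2 ^ n := Nat.pow_le_pow_right (by norm_num) hn1
              omega
            have hreal : (2 : ℝ) ^ n + 2 ≤ 2 * (K : ℝ) := by exact_mod_cast hnat
            have hne : n = m / 2 := hn
            rw [← hne]
            linarith
          · have hm3' : m = 3 := by omega
            subst hm3'
            have h1 : (1 : ℝ) ≤ Real.sqrt ((3 : ℕ) : ℝ) := by
              rw [show (1 : ℝ) = Real.sqrt 1 from Real.sqrt_one.symm]
              exact Real.sqrt_le_sqrt (by norm_num)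
            have h0 : (0 : ℝ) < Real.sqrt ((3 : ℕ) : ℝ) := lt_of_lt_of_le one_pos h1
            have hKval : K = 3 := by rw [hK, hn]; rfl
            calc (2 : ℝ) ^ (3 / 2) / Real.sqrt ((3 : ℕ) : ℝ)
                = 2 / Real.sqrt ((3 : ℕ) : ℝ) := by norm_num
              _ ≤ 2 := by rw [div_le_iff₀ h0]; linarith
              _ ≤ (K : ℝ) - 1 := by rw [hKval]; norm_num
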